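/- arXiv:2604.10114 — 2 statements merged into one kernel-verified Lean document; each statement's English description precedes it below -/
import Mathlib

section
/- Let Z be a nonempty finite type, q : Z → ℝ a probability vector with q z > 0 for every z, M : K → Z → ℝ a constraint matrix indexed by a finite type K, and b : K → ℝ. Let S = { p ∈ Δ(Z) : ∀ k, ∑_z M k z · p z ≥ b k }. If S is nonempty, then there exists a unique p* ∈ S such that KL(p*‖q) ≤ KL(p‖q) for every p ∈ S. -/
/-- A probability vector on a finite type `Z`. -/
def IsProbVec {Z : Type*} [Fintype Z] (p : Z → ℝ) : Prop :=
  (∀ z, 0 ≤ p z) ∧ ∑ z, p z = 1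

/-- Kullback–Leibler divergence on a finite type.  Note that when `p z = 0`
the summand `p z * log (p z / q z)` is `0`, matching the convention. -/
noncomputable def KL {Z : Type*} [Fintype Z] (p q : Z → ℝ) : ℝ :=
  ∑ z, p z * Real.log (p z / q z)

/-- **Existence and uniqueness of the KL projection** onto the constrained
polytope `S = {p ∈ Δ(Z) : ∀ k, ∑ z, M k z * p z ≥ b k}`, provided `S ≠ ∅`. -/
theorem kl_projection_existsUnique
    {Z K : Type*} [Fintype Z] [Nonempty Z] [Fintype K]
    (q : Z → ℝ) (hq : IsProbVec q) (hq0 : ∀ z, 0 < q z)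
    (M : K → Z → ℝ) (b : K → ℝ)
    (hS : ∃ p : Z → ℝ, IsProbVec p ∧ ∀ k, b k ≤ ∑ z, M k z * p z) :
    ∃! pstar : Z → ℝ,
      (IsProbVec pstar ∧ ∀ k, b k ≤ ∑ z, M k z * pstar z) ∧
      ∀ p : Z → ℝ, (IsProbVec p ∧ ∀ k, b k ≤ ∑ z, M k z * p z) →
        KL pstar q ≤ KL p q := by
  classical
  set S : Set (Z → ℝ) := {p | IsProbVec p ∧ ∀ k, b k ≤ ∑ z, M k z * p z} with hSdef
  -- rewrite KL in a manifestly continuous form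
  have hklrw : ∀ p : Z → ℝ, KL p q = ∑ z, (p z * Real.log (p z) - p z * Real.log (q z)) := by
    intro p
    unfold KL
    refine Finset.sum_congr rfl fun z _ => ?_
    rcases eq_or_ne (p z) 0 with h | h
    · simp [h]
    · rw [Real.log_div h (hq0 z).ne']; ring
  have hcont : Continuous fun p : Z → ℝ => KL p q := by
    have : (fun p : Z → ℝ => KL p q)
        = fun p => ∑ z, (p z * Real.log (p z) - p z * Real.log (q z)) :=
      funext hklrw
    rw [this]
    refine continuous_finset_sum _ fun z _ => Continuous.sub ?_ ?_
    · exact Real.continuous_mul_log.comp (continuous_apply z)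
    · exact (continuous_apply z).mul continuous_const
  -- S is closed
  have hSclosed : IsClosed S := by
    have : S = (⋂ z, {p : Z → ℝ | 0 ≤ p z}) ∩ {p | ∑ z, p z = 1}
        ∩ ⋂ k, {p : Z → ℝ | b k ≤ ∑ z, M k z * p z} := by
      ext p
      constructor
      · rintro ⟨⟨h1, h2⟩, h3⟩
        exact ⟨⟨Set.mem_iInter.mpr h1, h2⟩, Set.mem_iInter.mpr h3⟩
      · rintro ⟨⟨h1, h2⟩, h3⟩
        exact ⟨⟨Set.mem_iInter.mp h1, h2⟩, Set.mem_iInter.mp h3⟩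
    rw [this]
    refine ((IsClosed.inter ?_ ?_).inter ?_)
    · exact isClosed_iInter fun z => isClosed_le continuous_const (continuous_apply z)
    · exact isClosed_eq (continuous_finset_sum _ fun z _ => continuous_apply z) continuous_const
    · exact isClosed_iInter fun k => isClosed_le continuous_const
        (continuous_finset_sum _ fun z _ => continuous_const.mul (continuous_apply z))
  -- S is contained in [0,1]^Z hence compact
  have hSsub : S ⊆ Set.Icc (0 : Z → ℝ) 1 := by
    intro p hp
    refine ⟨fun z => hp.1.1 z, fun z => ?_⟩
    have := Finset.single_le_sum (f := p) (fun i _ => hp.1.1 i) (Finset.mem_univ z)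
    simpa [hp.1.2] using this
  have hScompact : IsCompact S :=
    (isCompact_Icc (a := (0 : Z → ℝ)) (b := 1)).of_isClosed_subset hSclosed hSsub
  have hSne : S.Nonempty := hS
  obtain ⟨pstar, hpsS, hmin⟩ := hScompact.exists_isMinOn hSne hcont.continuousOn
  refine ⟨pstar, ⟨⟨hpsS.1, hpsS.2⟩, fun p hp => hmin hp⟩, ?_⟩
  -- uniqueness
  rintro y ⟨hyS, hymin⟩
  by_contra hne
  have hyS' : y ∈ S := hyS
  have hKLeq : KL y q = KL pstar q :=
    le_antisymm (hymin pstar ⟨hpsS.1, hpsS.2⟩) (hmin hyS')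
  set m : Z → ℝ := fun z => (y z + pstar z) / 2 with hm
  have hmS : m ∈ S := by
    refine ⟨⟨fun z => div_nonneg (add_nonneg (hyS'.1.1 z) (hpsS.1.1 z)) (by norm_num), ?_⟩, fun k => ?_⟩
    · have : ∑ z, m z = (∑ z, y z + ∑ z, pstar z) / 2 := by
        show ∑ z, (y z + pstar z) / 2 = _
        rw [← Finset.sum_add_distrib, Finset.sum_div]
      rw [this, hyS'.1.2, hpsS.1.2]; norm_num
    · have h1 : ∑ z, M k z * m z = (∑ z, M k z * y z + ∑ z, M k z * pstar z) / 2 := by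
        show ∑ z, M k z * ((y z + pstar z) / 2) = _
        rw [← Finset.sum_add_distrib, Finset.sum_div]
        exact Finset.sum_congr rfl fun z _ => by ring
      rw [h1]
      have := add_le_add (hyS'.2 k) (hpsS.2 k)
      linarith
  -- strict convexity gives KL m q < KL pstar q
  obtain ⟨z0, hz0⟩ : ∃ z, y z ≠ pstar z := by
    by_contra h
    push_neg at h
    exact hne (funext h)
  have hconv := Real.strictConvexOn_mul_log
  have hpt : ∀ z, m z * Real.log (m z) - m z * Real.log (q z) ≤
      ((y z * Real.log (y z) - y z * Real.log (q z))
        + (pstar z * Real.log (pstar z) - pstar z * Real.log (q z))) / 2 := by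
    intro z
    have hle : m z * Real.log (m z) ≤
        (y z * Real.log (y z) + pstar z * Real.log (pstar z)) / 2 := by
      have := hconv.convexOn.2 (Set.mem_Ici.mpr (hyS'.1.1 z)) (Set.mem_Ici.mpr (hpsS.1.1 z))
        (le_of_lt one_half_pos) (le_of_lt one_half_pos) (by norm_num)
      simp only [smul_eq_mul] at this
      calc m z * Real.log (m z)
          = ((1:ℝ)/2 * y z + 1/2 * pstar z) * Real.log (1/2 * y z + 1/2 * pstar z) := by
            rw [hm]; ring_nf
        _ ≤ 1/2 * (y z * Real.log (y z)) + 1/2 * (pstar z * Real.log (pstar z)) := this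
        _ = (y z * Real.log (y z) + pstar z * Real.log (pstar z)) / 2 := by ring
    have hlin : m z * Real.log (q z)
        = (y z * Real.log (q z) + pstar z * Real.log (q z)) / 2 := by
      rw [hm]; ring
    linarith
  have hptstrict : m z0 * Real.log (m z0) - m z0 * Real.log (q z0) <
      ((y z0 * Real.log (y z0) - y z0 * Real.log (q z0))
        + (pstar z0 * Real.log (pstar z0) - pstar z0 * Real.log (q z0))) / 2 := by
    have hlt : m z0 * Real.log (m z0) <
        (y z0 * Real.log (y z0) + pstar z0 * Real.log (pstar z0)) / 2 := by
      have := hconv.2 (Set.mem_Ici.mpr (hyS'.1.1 z0)) (Set.mem_Ici.mpr (hpsS.1.1 z0)) hz0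
        one_half_pos one_half_pos (by norm_num)
      simp only [smul_eq_mul] at this
      calc m z0 * Real.log (m z0)
          = ((1:ℝ)/2 * y z0 + 1/2 * pstar z0) * Real.log (1/2 * y z0 + 1/2 * pstar z0) := by
            rw [hm]; ring_nf
        _ < 1/2 * (y z0 * Real.log (y z0)) + 1/2 * (pstar z0 * Real.log (pstar z0)) := this
        _ = (y z0 * Real.log (y z0) + pstar z0 * Real.log (pstar z0)) / 2 := by ring
    have hlin : m z0 * Real.log (q z0)
        = (y z0 * Real.log (q z0) + pstar z0 * Real.log (q z0)) / 2 := by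
      rw [hm]; ring
    linarith
  have hsumlt : KL m q < (KL y q + KL pstar q) / 2 := by
    rw [hklrw m, hklrw y, hklrw pstar, ← Finset.sum_add_distrib, Finset.sum_div]
    exact Finset.sum_lt_sum (fun z _ => hpt z) ⟨z0, Finset.mem_univ z0, hptstrict⟩
  rw [hKLeq] at hsumlt
  have : KL m q < KL pstar q := by linarith
  exact absurd (hmin hmS) (not_le.mpr this)
end

section
/- Let X and Y be finite types, K a nonempty finite index type, and for each i ∈ K let pᵢ : X → Prop (primes) and sᵢ : Y → Prop (subs) be predicates, let Pᵢ be a probability vector on X with support(Pᵢ) = { x : pᵢ x } and Qᵢ a probability vector on Y with support(Qᵢ) = { y : sᵢ y }, and let θ : K → ℝ satisfy θ i > 0 for all i and ∑_i θ i = 1. Assume the primes are mutually exclusive: for i ≠ j there is no x with pᵢ x and pⱼ x. Then R(x,y) := ∑_i θ i · Pᵢ x · Qᵢ y is a probability vector on X × Y, and for every (x,y), R(x,y) > 0 if and only if there exists i with pᵢ x and sᵢ y; equivalently, support(R) equals the set of models of the formula Φ(x,y) = ⋁_i (pᵢ x ∧ sᵢ y). -/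
/-- **Structural nullity at a PSDD decision node**: a mixture of decomposable
products over mutually exclusive primes is a probability vector whose support
is exactly the set of models of `Φ(x,y) = ⋁ i, prime i x ∧ sub i y`. -/
theorem psdd_decision_node_structural_nullity
    {X Y K : Type*} [Fintype X] [Fintype Y] [Fintype K] [Nonempty K]
    (prime : K → X → Prop) (sub : K → Y → Prop)
    (P : K → X → ℝ) (Q : K → Y → ℝ)
    (hP : ∀ i, IsProbVec (P i)) (hQ : ∀ i, IsProbVec (Q i))
    (hPsupp : ∀ i, {x | 0 < P i x} = {x | prime i x})
    (hQsupp : ∀ i, {y | 0 < Q i y} = {y | sub i y})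
    (θ : K → ℝ) (hθ : ∀ i, 0 < θ i) (hθ1 : ∑ i, θ i = 1)
    (hexcl : ∀ i j, i ≠ j → ¬ ∃ x, prime i x ∧ prime j x) :
    IsProbVec (fun xy : X × Y => ∑ i, θ i * P i xy.1 * Q i xy.2) ∧
    (∀ x y, 0 < ∑ i, θ i * P i x * Q i y ↔ ∃ i, prime i x ∧ sub i y) ∧
    {xy : X × Y | 0 < ∑ i, θ i * P i xy.1 * Q i xy.2} =
      {xy : X × Y | ∃ i, prime i xy.1 ∧ sub i xy.2} := by
  have hPpos : ∀ i x, 0 < P i x ↔ prime i x := fun i x =>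
    Set.ext_iff.mp (hPsupp i) x
  have hQpos : ∀ i y, 0 < Q i y ↔ sub i y := fun i y =>
    Set.ext_iff.mp (hQsupp i) y
  have hterm_nonneg : ∀ (x : X) (y : Y) (i : K), 0 ≤ θ i * P i x * Q i y := by
    intro x y i
    exact mul_nonneg (mul_nonneg (hθ i).le ((hP i).1 x)) ((hQ i).1 y)
  have hiff : ∀ x y, (0 < ∑ i, θ i * P i x * Q i y) ↔ ∃ i, prime i x ∧ sub i y := by
    intro x y
    constructor
    · intro h
      by_contra hc
      push_neg at hc
      have : ∑ i, θ i * P i x * Q i y = 0 := by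
        apply Finset.sum_eq_zero
        intro i _
        rcases (not_and_or.mp (fun hh => (hc i hh.1 hh.2))) with h1 | h2
        · have : P i x = 0 := le_antisymm (not_lt.mp fun hp => h1 ((hPpos i x).mp hp)) ((hP i).1 x)
          simp [this]
        · have : Q i y = 0 := le_antisymm (not_lt.mp fun hq => h2 ((hQpos i y).mp hq)) ((hQ i).1 y)
          simp [this]
      linarith
    · rintro ⟨i, hpi, hsi⟩
      have hi : 0 < θ i * P i x * Q i y :=
        mul_pos (mul_pos (hθ i) ((hPpos i x).mpr hpi)) ((hQpos i y).mpr hsi)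
      exact Finset.sum_pos' (fun j _ => hterm_nonneg x y j) ⟨i, Finset.mem_univ i, hi⟩
  refine ⟨⟨fun xy => Finset.sum_nonneg fun i _ => hterm_nonneg xy.1 xy.2 i, ?_⟩, hiff, ?_⟩
  · have h1 : ∑ xy : X × Y, ∑ i, θ i * P i xy.1 * Q i xy.2
        = ∑ i, ∑ xy : X × Y, θ i * P i xy.1 * Q i xy.2 := Finset.sum_comm
    have h2 : ∀ i : K, ∑ xy : X × Y, θ i * P i xy.1 * Q i xy.2 = θ i := by
      intro i
      rw [Fintype.sum_prod_type]
      simp_rw [mul_assoc, ← Finset.mul_sum, (hQ i).2, mul_one, (hP i).2, mul_one]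
    simp only [h1, h2, hθ1]
  · ext ⟨x, y⟩
    exact hiff x y
end
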